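/- arXiv:1704.01354 — 2 statements merged into one kernel-verified Lean document; each statement's English description precedes it below -/
import Mathlib

section
/- Let μ₁ and μ₂ be Borel probability measures on Σ, let 0 < α ≤ 1 and suppose κ := κ_α(M,μ₁) < 1. Then for every n ∈ ℕ and every φ ∈ H_α(X): ‖L_{M,μ₁}^n φ − L_{M,μ₂}^n φ‖_∞ ≤ (‖μ₁ − μ₂‖_TV/(1−κ)) · v_α(φ), where ‖μ₁ − μ₂‖_TV denotes the total variation norm of the signed measure μ₁ − μ₂. -/
open MeasureTheory ENNReal

/-- The `α`-Hölder seminorm `v_α(φ) = diam(X)^α ⬝ sup_{x ≠ y} |φ x - φ y| / d(x,y)^α`,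
valued in `ℝ≥0∞`. -/
noncomputable def eHolderSemi {X : Type*} [PseudoMetricSpace X] (α : ℝ) (φ : X → ℝ) : ℝ≥0∞ :=
  (EMetric.diam (Set.univ : Set X)) ^ α *
    ⨆ pq : { pq : X × X // pq.1 ≠ pq.2 },
      ENNReal.ofReal (|φ pq.val.1 - φ pq.val.2| / dist pq.val.1 pq.val.2 ^ α)

/-- The Markov (transfer) operator `(L_{M,μ} φ)(p) = ∫_Σ φ(M(x,p)) dμ(x)`. -/
noncomputable def transferOp {S X : Type*} [MeasurableSpace S] (μ : Measure S)
    (M : S × X → X) (φ : X → ℝ) : X → ℝ :=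
  fun p => ∫ x, φ (M (x, p)) ∂μ

/-- `κ_α(M,μ) = sup_{p ≠ q} ∫_Σ (d(M(x,p),M(x,q))/d(p,q))^α dμ(x)`. -/
noncomputable def kappaAlpha {S X : Type*} [MeasurableSpace S] [PseudoMetricSpace X]
    (μ : Measure S) (α : ℝ) (M : S × X → X) : ℝ≥0∞ :=
  ⨆ pq : { pq : X × X // pq.1 ≠ pq.2 },
    ∫⁻ x, ENNReal.ofReal
      ((dist (M (x, pq.val.1)) (M (x, pq.val.2)) / dist pq.val.1 pq.val.2) ^ α) ∂μ

/-- The total variation norm `‖μ₁ − μ₂‖` of the difference of two finite measures. -/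
noncomputable def tvNorm {S : Type*} [MeasurableSpace S]
    (μ₁ μ₂ : Measure S) [IsFiniteMeasure μ₁] [IsFiniteMeasure μ₂] : ℝ≥0∞ :=
  (μ₁.toSignedMeasure - μ₂.toSignedMeasure).totalVariation Set.univ

section Aux

variable {S X : Type*} [MetricSpace S] [CompactSpace S]
    [MeasurableSpace S] [BorelSpace S] [MetricSpace X] [CompactSpace X]

private lemma myInt (μ : Measure S) [IsFiniteMeasure μ] {f : S → ℝ} (hf : Continuous f) :
    Integrable f μ := by
  rw [← integrableOn_univ]
  exact hf.continuousOn.integrableOn_compact isCompact_univ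

private lemma tvNorm_ne_top (μ₁ μ₂ : Measure S) [IsFiniteMeasure μ₁] [IsFiniteMeasure μ₂] :
    tvNorm μ₁ μ₂ ≠ ⊤ := by
  rw [tvNorm, SignedMeasure.totalVariation, Measure.add_apply]
  exact ENNReal.add_ne_top.2 ⟨measure_ne_top _ _, measure_ne_top _ _⟩

private lemma tvNorm_comm (μ₁ μ₂ : Measure S) [IsFiniteMeasure μ₁] [IsFiniteMeasure μ₂] :
    tvNorm μ₂ μ₁ = tvNorm μ₁ μ₂ := by
  rw [tvNorm, tvNorm, ← SignedMeasure.totalVariation_neg, neg_sub]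

private lemma abs_sub_le_tv (μ₁ μ₂ : Measure S) [IsFiniteMeasure μ₁] [IsFiniteMeasure μ₂]
    {A : Set S} (hA : MeasurableSet A) :
    |(μ₁ A).toReal - (μ₂ A).toReal| ≤ (tvNorm μ₁ μ₂).toReal := by
  set ν := μ₁.toSignedMeasure - μ₂.toSignedMeasure with hν
  have hνA : ν A = (μ₁ A).toReal - (μ₂ A).toReal := by
    rw [hν, VectorMeasure.sub_apply, Measure.toSignedMeasure_apply_measurable hA,
      Measure.toSignedMeasure_apply_measurable hA]
    rfl
  set J := ν.toJordanDecomposition with hJdef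
  have hJ : ν A = (J.posPart A).toReal - (J.negPart A).toReal := by
    conv_lhs => rw [← ν.toSignedMeasure_toJordanDecomposition]
    rw [JordanDecomposition.toSignedMeasure, VectorMeasure.sub_apply,
      Measure.toSignedMeasure_apply_measurable hA, Measure.toSignedMeasure_apply_measurable hA]
    rfl
  have htv : (tvNorm μ₁ μ₂).toReal = (J.posPart Set.univ).toReal + (J.negPart Set.univ).toReal := by
    rw [tvNorm, SignedMeasure.totalVariation, Measure.add_apply,
      ENNReal.toReal_add (measure_ne_top _ _) (measure_ne_top _ _)]
  have h1 : (J.posPart A).toReal ≤ (J.posPart Set.univ).toReal :=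
    ENNReal.toReal_mono (measure_ne_top _ _) (measure_mono (Set.subset_univ A))
  have h2 : (J.negPart A).toReal ≤ (J.negPart Set.univ).toReal :=
    ENNReal.toReal_mono (measure_ne_top _ _) (measure_mono (Set.subset_univ A))
  have h3 : 0 ≤ (J.posPart A).toReal := ENNReal.toReal_nonneg
  have h4 : 0 ≤ (J.negPart A).toReal := ENNReal.toReal_nonneg
  rw [← hνA, hJ, htv, abs_le]
  constructor <;> linarith

private lemma oneSided (μ₁ μ₂ : Measure S) [IsProbabilityMeasure μ₁] [IsProbabilityMeasure μ₂]
    {g : S → ℝ} (hg : Continuous g) {B : ℝ} (hB : ∀ x y, |g x - g y| ≤ B) :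
    ∫ x, g x ∂μ₁ - ∫ x, g x ∂μ₂ ≤ B * (tvNorm μ₁ μ₂).toReal := by
  have hSne : Nonempty S := by
    by_contra h
    have h0 : μ₁ Set.univ = 0 := by
      rw [Set.univ_eq_empty_iff.2 (not_nonempty_iff.1 h)]; simp
    rw [measure_univ] at h0; exact one_ne_zero h0
  obtain ⟨x₀, -, hx₀⟩ := isCompact_univ.exists_isMinOn Set.univ_nonempty hg.continuousOn
  set a := g x₀ with ha
  set h := fun x => g x - a with hh
  have hhc : Continuous h := hg.sub continuous_const
  have hh0 : ∀ x, 0 ≤ h x := fun x => sub_nonneg.2 (hx₀ (Set.mem_univ x))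
  have hhB : ∀ x, h x ≤ B := fun x => by
    have h1 := hB x x₀; rw [abs_le] at h1
    simp only [hh]; linarith [h1.2]
  have hB0 : 0 ≤ B := le_trans (abs_nonneg _) (hB x₀ x₀)
  obtain ⟨s, hs, hsle, hsge⟩ := hahn_decomposition (μ := μ₁) (ν := μ₂)
  have hrle1 : μ₂.restrict s ≤ μ₁.restrict s := by
    refine Measure.le_iff.2 fun t ht => ?_
    rw [Measure.restrict_apply ht, Measure.restrict_apply ht]
    exact hsle _ (ht.inter hs) Set.inter_subset_right
  have hrle2 : μ₁.restrict sᶜ ≤ μ₂.restrict sᶜ := by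
    refine Measure.le_iff.2 fun t ht => ?_
    rw [Measure.restrict_apply ht, Measure.restrict_apply ht]
    exact hsge _ (ht.inter hs.compl) Set.inter_subset_right
  have i1 : Integrable h μ₁ := myInt μ₁ hhc
  have i2 : Integrable h μ₂ := myInt μ₂ hhc
  have iB1 : Integrable (fun x => B - h x) μ₁ := (integrable_const B).sub i1
  have iB2 : Integrable (fun x => B - h x) μ₂ := (integrable_const B).sub i2
  have e1 : ∫ x in s, h x ∂μ₁ + ∫ x in sᶜ, h x ∂μ₁ = ∫ x, h x ∂μ₁ := integral_add_compl hs i1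
  have e2 : ∫ x in s, h x ∂μ₂ + ∫ x in sᶜ, h x ∂μ₂ = ∫ x, h x ∂μ₂ := integral_add_compl hs i2
  have c1 : ∫ x in sᶜ, h x ∂μ₁ ≤ ∫ x in sᶜ, h x ∂μ₂ :=
    integral_mono_measure hrle2 (Filter.Eventually.of_forall hh0) i2.restrict
  have c2 : ∫ x in s, (B - h x) ∂μ₂ ≤ ∫ x in s, (B - h x) ∂μ₁ :=
    integral_mono_measure hrle1
      (Filter.Eventually.of_forall fun x => sub_nonneg.2 (hhB x)) iB1.restrict
  have key1 : ∫ x in s, h x ∂μ₁ + ∫ x in s, (B - h x) ∂μ₁ = B * (μ₁ s).toReal := by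
    rw [← integral_add i1.restrict iB1.restrict]
    simp only [add_sub_cancel]
    rw [setIntegral_const]
    simp [smul_eq_mul, mul_comm]
    exact Or.inl rfl
  have key2 : ∫ x in s, h x ∂μ₂ + ∫ x in s, (B - h x) ∂μ₂ = B * (μ₂ s).toReal := by
    rw [← integral_add i2.restrict iB2.restrict]
    simp only [add_sub_cancel]
    rw [setIntegral_const]
    simp [smul_eq_mul, mul_comm]
    exact Or.inl rfl
  have hgh : ∀ (μ : Measure S) [IsProbabilityMeasure μ],
      ∫ x, h x ∂μ = ∫ x, g x ∂μ - a := by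
    intro μ _
    rw [hh]
    rw [integral_sub (myInt μ hg) (integrable_const a), integral_const]
    simp
  have hstep : ∫ x, g x ∂μ₁ - ∫ x, g x ∂μ₂ ≤ B * ((μ₁ s).toReal - (μ₂ s).toReal) := by
    have hg1 := hgh μ₁
    have hg2 := hgh μ₂
    nlinarith [c1, c2, key1, key2, e1, e2]
  calc ∫ x, g x ∂μ₁ - ∫ x, g x ∂μ₂ ≤ B * ((μ₁ s).toReal - (μ₂ s).toReal) := hstep
    _ ≤ B * |(μ₁ s).toReal - (μ₂ s).toReal| :=
        mul_le_mul_of_nonneg_left (le_abs_self _) hB0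
    _ ≤ B * (tvNorm μ₁ μ₂).toReal :=
        mul_le_mul_of_nonneg_left (abs_sub_le_tv μ₁ μ₂ hs) hB0

private lemma claimA (μ₁ μ₂ : Measure S) [IsProbabilityMeasure μ₁] [IsProbabilityMeasure μ₂]
    {g : S → ℝ} (hg : Continuous g) {B : ℝ} (hB : ∀ x y, |g x - g y| ≤ B) :
    |∫ x, g x ∂μ₁ - ∫ x, g x ∂μ₂| ≤ B * (tvNorm μ₁ μ₂).toReal := by
  rw [abs_sub_le_iff]
  refine ⟨oneSided μ₁ μ₂ hg hB, ?_⟩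
  have := oneSided μ₂ μ₁ hg hB
  rwa [tvNorm_comm] at this

private lemma transferOp_continuous (μ : Measure S) [IsFiniteMeasure μ] {M : S × X → X}
    (hM : Continuous M) {ψ : X → ℝ} (hψ : Continuous ψ) :
    Continuous (transferOp μ M ψ) := by
  obtain ⟨C, hC⟩ : ∃ C : ℝ, ∀ y : X, ‖ψ y‖ ≤ C := by
    rcases isEmpty_or_nonempty X with hX | hX
    · exact ⟨0, fun y => (IsEmpty.false y).elim⟩
    · obtain ⟨y₀, -, hy₀⟩ := isCompact_univ.exists_isMaxOn Set.univ_nonempty hψ.norm.continuousOn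
      exact ⟨‖ψ y₀‖, fun y => hy₀ (Set.mem_univ y)⟩
  exact continuous_of_dominated
    (fun p => (hψ.comp (hM.comp (continuous_id.prodMk continuous_const))).aestronglyMeasurable)
    (fun p => Filter.Eventually.of_forall fun x => hC _)
    (integrable_const C)
    (Filter.Eventually.of_forall fun x =>
      hψ.comp (hM.comp (continuous_const.prodMk continuous_id)))

private lemma transferOp_abs_le (μ : Measure S) [IsProbabilityMeasure μ] {M : S × X → X}
    (hM : Continuous M) {ψ : X → ℝ} (hψ : Continuous ψ) {B : ℝ} (hB : ∀ q, |ψ q| ≤ B)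
    (p : X) : |transferOp μ M ψ p| ≤ B := by
  have := norm_integral_le_of_norm_le_const (μ := μ) (f := fun x => ψ (M (x, p))) (C := B)
    (Filter.Eventually.of_forall fun x => by simpa [Real.norm_eq_abs] using hB (M (x, p)))
  simpa [transferOp, Real.norm_eq_abs, measure_univ] using this

private lemma transferOp_holder (μ₁ : Measure S) [IsProbabilityMeasure μ₁] {M : S × X → X}
    (hM : Continuous M) {α : ℝ} (hα0 : 0 < α)
    (hκtop : kappaAlpha μ₁ α M ≠ ⊤) {ψ : X → ℝ} (hψ : Continuous ψ) {c : ℝ} (hc : 0 ≤ c)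
    (hH : ∀ p q : X, |ψ p - ψ q| ≤ c * dist p q ^ α) (p q : X) :
    |transferOp μ₁ M ψ p - transferOp μ₁ M ψ q| ≤
      ((kappaAlpha μ₁ α M).toReal * c) * dist p q ^ α := by
  rcases eq_or_ne p q with rfl | hpq
  · simp [Real.zero_rpow (ne_of_gt hα0)]
  · set d := dist p q with hd'
    have hd : 0 < d := dist_pos.2 hpq
    have hdα : 0 < d ^ α := Real.rpow_pos_of_pos hd α
    set f := fun x : S => (dist (M (x, p)) (M (x, q)) / d) ^ α with hf
    have hfc : Continuous f := by
      apply Continuous.rpow_const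
      · exact ((hM.comp (continuous_id.prodMk continuous_const)).dist
          (hM.comp (continuous_id.prodMk continuous_const))).div_const d
      · exact fun x => Or.inr hα0.le
    have hf0 : ∀ x, 0 ≤ f x := fun x => Real.rpow_nonneg (div_nonneg dist_nonneg hd.le) α
    have hfi : Integrable f μ₁ := myInt μ₁ hfc
    have hfκ : ∫ x, f x ∂μ₁ ≤ (kappaAlpha μ₁ α M).toReal := by
      have h1 : ENNReal.ofReal (∫ x, f x ∂μ₁) = ∫⁻ x, ENNReal.ofReal (f x) ∂μ₁ :=
        ofReal_integral_eq_lintegral_ofReal hfi (Filter.Eventually.of_forall hf0)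
      have h2 : (∫⁻ x, ENNReal.ofReal (f x) ∂μ₁) ≤ kappaAlpha μ₁ α M :=
        le_iSup (fun pq : { pq : X × X // pq.1 ≠ pq.2 } => ∫⁻ x, ENNReal.ofReal
          ((dist (M (x, pq.val.1)) (M (x, pq.val.2)) / dist pq.val.1 pq.val.2) ^ α) ∂μ₁)
          ⟨(p, q), hpq⟩
      calc ∫ x, f x ∂μ₁ = (ENNReal.ofReal (∫ x, f x ∂μ₁)).toReal :=
            (ENNReal.toReal_ofReal (integral_nonneg hf0)).symm
        _ ≤ (kappaAlpha μ₁ α M).toReal := ENNReal.toReal_mono hκtop (h1 ▸ h2)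
    have int1 : Integrable (fun x => ψ (M (x, p))) μ₁ :=
      myInt μ₁ (hψ.comp (hM.comp (continuous_id.prodMk continuous_const)))
    have int2 : Integrable (fun x => ψ (M (x, q))) μ₁ :=
      myInt μ₁ (hψ.comp (hM.comp (continuous_id.prodMk continuous_const)))
    have hpt : ∀ x, |ψ (M (x, p)) - ψ (M (x, q))| ≤ (c * d ^ α) * f x := by
      intro x
      have h1 := hH (M (x, p)) (M (x, q))
      have heq : (c * d ^ α) * f x = c * dist (M (x, p)) (M (x, q)) ^ α := by
        show c * d ^ α * (dist (M (x, p)) (M (x, q)) / d) ^ α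
          = c * dist (M (x, p)) (M (x, q)) ^ α
        rw [Real.div_rpow dist_nonneg hd.le]
        field_simp
      rw [heq]; exact h1
    have hmain : |transferOp μ₁ M ψ p - transferOp μ₁ M ψ q| ≤
        ∫ x, (c * d ^ α) * f x ∂μ₁ := by
      rw [show transferOp μ₁ M ψ p - transferOp μ₁ M ψ q
          = ∫ x, (ψ (M (x, p)) - ψ (M (x, q))) ∂μ₁ by
        rw [integral_sub int1 int2]; rfl]
      calc |∫ x, (ψ (M (x, p)) - ψ (M (x, q))) ∂μ₁|
          ≤ ∫ x, |ψ (M (x, p)) - ψ (M (x, q))| ∂μ₁ := by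
            simpa [Real.norm_eq_abs] using
              norm_integral_le_integral_norm (fun x => ψ (M (x, p)) - ψ (M (x, q))) (μ := μ₁)
        _ ≤ ∫ x, (c * d ^ α) * f x ∂μ₁ :=
            integral_mono (int1.sub int2).abs (hfi.const_mul _) hpt
    calc |transferOp μ₁ M ψ p - transferOp μ₁ M ψ q| ≤ ∫ x, (c * d ^ α) * f x ∂μ₁ := hmain
      _ = (c * d ^ α) * ∫ x, f x ∂μ₁ := integral_const_mul _ _
      _ ≤ (c * d ^ α) * (kappaAlpha μ₁ α M).toReal :=
          mul_le_mul_of_nonneg_left hfκ (by positivity)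
      _ = ((kappaAlpha μ₁ α M).toReal * c) * d ^ α := by ring

end Aux

/-- If `κ := κ_α(M,μ₁) < 1` then for all `n` and all `φ ∈ H_α(X)`,
`‖L_{M,μ₁}^n φ − L_{M,μ₂}^n φ‖_∞ ≤ (‖μ₁ − μ₂‖_TV/(1−κ)) · v_α(φ)`. -/
theorem stmt9 {S X : Type*} [MetricSpace S] [CompactSpace S]
    [MeasurableSpace S] [BorelSpace S] [MetricSpace X] [CompactSpace X]
    (μ₁ μ₂ : Measure S) [IsProbabilityMeasure μ₁] [IsProbabilityMeasure μ₂]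
    (M : S × X → X) (hM : Continuous M)
    (α : ℝ) (hα0 : 0 < α) (hα1 : α ≤ 1)
    (hκ : kappaAlpha μ₁ α M < 1)
    (n : ℕ) (φ : X → ℝ) (hφc : Continuous φ) (hφ : eHolderSemi α φ < ⊤) :
    ∀ p : X, ENNReal.ofReal
        |(transferOp μ₁ M)^[n] φ p - (transferOp μ₂ M)^[n] φ p| ≤
      (tvNorm μ₁ μ₂ / (1 - kappaAlpha μ₁ α M)) * eHolderSemi α φ := by
  intro p
  set κ := kappaAlpha μ₁ α M with hκdef
  have hκtop : κ ≠ ⊤ := (hκ.trans ENNReal.one_lt_top).ne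
  set κr := κ.toReal with hκr
  have hκr0 : 0 ≤ κr := ENNReal.toReal_nonneg
  have hκr1 : κr < 1 := by
    rw [hκr, ← ENNReal.toReal_one]
    exact (ENNReal.toReal_lt_toReal hκtop ENNReal.one_ne_top).2 hκ
  set T := (tvNorm μ₁ μ₂).toReal with hT
  have hT0 : 0 ≤ T := ENNReal.toReal_nonneg
  set e := EMetric.diam (Set.univ : Set X) with he
  have hetop : e ≠ ⊤ := isCompact_univ.isBounded.ediam_ne_top
  set dR := Metric.diam (Set.univ : Set X) with hdR
  have hdR0 : 0 ≤ dR := Metric.diam_nonneg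
  set K := ⨆ pq : { pq : X × X // pq.1 ≠ pq.2 },
      ENNReal.ofReal (|φ pq.val.1 - φ pq.val.2| / dist pq.val.1 pq.val.2 ^ α) with hK
  have heH : eHolderSemi α φ = e ^ α * K := rfl
  have hKtop : K ≠ ⊤ := by
    rcases eq_or_ne e 0 with he0 | he0
    · have hsub : (Set.univ : Set X).Subsingleton := EMetric.diam_eq_zero_iff.1 he0
      have : IsEmpty { pq : X × X // pq.1 ≠ pq.2 } :=
        ⟨fun pq => pq.2 (hsub (Set.mem_univ _) (Set.mem_univ _))⟩
      rw [hK, iSup_of_empty]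
      simp
    · intro hKt
      apply hφ.ne
      rw [heH, hKt, ENNReal.mul_top]
      exact (ENNReal.rpow_pos (pos_iff_ne_zero.2 he0) hetop).ne'
  set c := K.toReal with hc
  have hc0 : 0 ≤ c := ENNReal.toReal_nonneg
  have hH : ∀ p q : X, |φ p - φ q| ≤ c * dist p q ^ α := by
    intro p q
    rcases eq_or_ne p q with rfl | hpq
    · simp [Real.zero_rpow (ne_of_gt hα0)]
    · have h1 : ENNReal.ofReal (|φ p - φ q| / dist p q ^ α) ≤ K :=
        le_iSup (fun pq : { pq : X × X // pq.1 ≠ pq.2 } =>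
          ENNReal.ofReal (|φ pq.val.1 - φ pq.val.2| / dist pq.val.1 pq.val.2 ^ α)) ⟨(p, q), hpq⟩
      rw [← ENNReal.ofReal_toReal hKtop] at h1
      have h2 := (ENNReal.ofReal_le_ofReal_iff ENNReal.toReal_nonneg).1 h1
      have hdα : 0 < dist p q ^ α := Real.rpow_pos_of_pos (dist_pos.2 hpq) α
      calc |φ p - φ q| = |φ p - φ q| / dist p q ^ α * dist p q ^ α := by
            field_simp
        _ ≤ c * dist p q ^ α := mul_le_mul_of_nonneg_right h2 hdα.le
  -- main induction
  have main : ∀ m : ℕ,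
      Continuous ((transferOp μ₁ M)^[m] φ) ∧ Continuous ((transferOp μ₂ M)^[m] φ) ∧
      (∀ p q : X, |(transferOp μ₁ M)^[m] φ p - (transferOp μ₁ M)^[m] φ q| ≤
        (κr ^ m * c) * dist p q ^ α) ∧
      (∀ p : X, |(transferOp μ₁ M)^[m] φ p - (transferOp μ₂ M)^[m] φ p| ≤
        T * (c * dR ^ α) * ∑ k ∈ Finset.range m, κr ^ k) := by
    intro m
    induction m with
    | zero =>
      refine ⟨hφc, hφc, by simpa using hH, fun p => by simp⟩
    | succ m ih =>
      obtain ⟨h1c, h2c, hH1, hIH⟩ := ih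
      set ψ₁ := (transferOp μ₁ M)^[m] φ with hψ₁
      set ψ₂ := (transferOp μ₂ M)^[m] φ with hψ₂
      have hit1 : (transferOp μ₁ M)^[m + 1] φ = transferOp μ₁ M ψ₁ :=
        Function.iterate_succ_apply' _ _ _
      have hit2 : (transferOp μ₂ M)^[m + 1] φ = transferOp μ₂ M ψ₂ :=
        Function.iterate_succ_apply' _ _ _
      have hc1' : Continuous (transferOp μ₁ M ψ₁) := transferOp_continuous μ₁ hM h1c
      have hc2' : Continuous (transferOp μ₂ M ψ₂) := transferOp_continuous μ₂ hM h2c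
      refine ⟨hit1 ▸ hc1', hit2 ▸ hc2', ?_, ?_⟩
      · intro p q
        rw [hit1]
        have := transferOp_holder μ₁ hM hα0 hκtop h1c (by positivity) hH1 p q
        calc |transferOp μ₁ M ψ₁ p - transferOp μ₁ M ψ₁ q|
            ≤ (κ.toReal * (κr ^ m * c)) * dist p q ^ α := this
          _ = (κr ^ (m + 1) * c) * dist p q ^ α := by rw [← hκr]; ring
      · intro p
        rw [hit1, hit2]
        have htri : |transferOp μ₁ M ψ₁ p - transferOp μ₂ M ψ₂ p| ≤
            |transferOp μ₁ M ψ₁ p - transferOp μ₂ M ψ₁ p| +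
            |transferOp μ₂ M ψ₁ p - transferOp μ₂ M ψ₂ p| := by
          have := abs_sub_le (transferOp μ₁ M ψ₁ p) (transferOp μ₂ M ψ₁ p)
            (transferOp μ₂ M ψ₂ p)
          linarith
        -- second term
        have hterm2 : |transferOp μ₂ M ψ₁ p - transferOp μ₂ M ψ₂ p| ≤
            T * (c * dR ^ α) * ∑ k ∈ Finset.range m, κr ^ k := by
          have ia : Integrable (fun x : S => ψ₁ (M (x, p))) μ₂ :=
            myInt μ₂ (h1c.comp (hM.comp (continuous_id.prodMk continuous_const)))
          have ib : Integrable (fun x : S => ψ₂ (M (x, p))) μ₂ :=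
            myInt μ₂ (h2c.comp (hM.comp (continuous_id.prodMk continuous_const)))
          have hsub : transferOp μ₂ M ψ₁ p - transferOp μ₂ M ψ₂ p =
              transferOp μ₂ M (fun q => ψ₁ q - ψ₂ q) p := by
            rw [transferOp, transferOp, transferOp, ← integral_sub ia ib]
          rw [hsub]
          exact transferOp_abs_le μ₂ hM (h1c.sub h2c) hIH p
        -- first term via claim A
        have hterm1 : |transferOp μ₁ M ψ₁ p - transferOp μ₂ M ψ₁ p| ≤
            ((κr ^ m * c) * dR ^ α) * T := by
          have hgc : Continuous fun x : S => ψ₁ (M (x, p)) :=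
            h1c.comp (hM.comp (continuous_id.prodMk continuous_const))
          have hgB : ∀ x y : S, |ψ₁ (M (x, p)) - ψ₁ (M (y, p))| ≤ (κr ^ m * c) * dR ^ α := by
            intro x y
            have h1 := hH1 (M (x, p)) (M (y, p))
            have h2 : dist (M (x, p)) (M (y, p)) ^ α ≤ dR ^ α :=
              Real.rpow_le_rpow dist_nonneg
                (Metric.dist_le_diam_of_mem isCompact_univ.isBounded
                  (Set.mem_univ _) (Set.mem_univ _)) hα0.le
            calc |ψ₁ (M (x, p)) - ψ₁ (M (y, p))|
                ≤ (κr ^ m * c) * dist (M (x, p)) (M (y, p)) ^ α := h1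
              _ ≤ (κr ^ m * c) * dR ^ α := mul_le_mul_of_nonneg_left h2 (by positivity)
          exact claimA μ₁ μ₂ hgc hgB
        calc |transferOp μ₁ M ψ₁ p - transferOp μ₂ M ψ₂ p|
            ≤ |transferOp μ₁ M ψ₁ p - transferOp μ₂ M ψ₁ p| +
              |transferOp μ₂ M ψ₁ p - transferOp μ₂ M ψ₂ p| := htri
          _ ≤ ((κr ^ m * c) * dR ^ α) * T +
              T * (c * dR ^ α) * ∑ k ∈ Finset.range m, κr ^ k := add_le_add hterm1 hterm2
          _ = T * (c * dR ^ α) * ∑ k ∈ Finset.range (m + 1), κr ^ k := by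
              rw [Finset.sum_range_succ]; ring
  -- geometric sum bound
  have hsum : (∑ k ∈ Finset.range n, κr ^ k) ≤ (1 - κr)⁻¹ := by
    have h1 : (0 : ℝ) < 1 - κr := by linarith
    rw [inv_eq_one_div, le_div_iff₀ h1]
    nlinarith [geom_sum_mul κr n, pow_nonneg hκr0 n]
  have hbound : |(transferOp μ₁ M)^[n] φ p - (transferOp μ₂ M)^[n] φ p| ≤
      T * (c * dR ^ α) * (1 - κr)⁻¹ := by
    calc |(transferOp μ₁ M)^[n] φ p - (transferOp μ₂ M)^[n] φ p|
        ≤ T * (c * dR ^ α) * ∑ k ∈ Finset.range n, κr ^ k := (main n).2.2.2 p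
      _ ≤ T * (c * dR ^ α) * (1 - κr)⁻¹ :=
          mul_le_mul_of_nonneg_left hsum (by positivity)
  -- convert to ℝ≥0∞
  have h1κ0 : (1 : ℝ≥0∞) - κ ≠ 0 := by
    simp only [ne_eq, tsub_eq_zero_iff_le, not_le]
    exact hκ
  have h1κtop : (1 : ℝ≥0∞) - κ ≠ ⊤ :=
    (tsub_le_self.trans_lt ENNReal.one_lt_top).ne
  have hκrsub : 1 - κr = ((1 : ℝ≥0∞) - κ).toReal := by
    rw [ENNReal.toReal_sub_of_le hκ.le ENNReal.one_ne_top, ENNReal.toReal_one]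
  have hκinv : ENNReal.ofReal ((1 - κr)⁻¹) = ((1 : ℝ≥0∞) - κ)⁻¹ := by
    rw [hκrsub, ENNReal.ofReal_inv_of_pos (ENNReal.toReal_pos h1κ0 h1κtop),
      ENNReal.ofReal_toReal h1κtop]
  have hTo : ENNReal.ofReal T = tvNorm μ₁ μ₂ := ENNReal.ofReal_toReal (tvNorm_ne_top μ₁ μ₂)
  have hco : ENNReal.ofReal c = K := ENNReal.ofReal_toReal hKtop
  have heαtop : e ^ α ≠ ⊤ := ENNReal.rpow_ne_top_of_nonneg hα0.le hetop
  have hdRo : ENNReal.ofReal (dR ^ α) = e ^ α := by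
    rw [hdR, Metric.diam]
    change ENNReal.ofReal (e.toReal ^ α) = e ^ α
    rw [ENNReal.toReal_rpow, ENNReal.ofReal_toReal heαtop]
  calc ENNReal.ofReal |(transferOp μ₁ M)^[n] φ p - (transferOp μ₂ M)^[n] φ p|
      ≤ ENNReal.ofReal (T * (c * dR ^ α) * (1 - κr)⁻¹) := ENNReal.ofReal_le_ofReal hbound
    _ = tvNorm μ₁ μ₂ * (K * e ^ α) * ((1 : ℝ≥0∞) - κ)⁻¹ := by
        rw [ENNReal.ofReal_mul (by positivity), ENNReal.ofReal_mul hT0,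
          ENNReal.ofReal_mul hc0, hTo, hco, hdRo, hκinv]
    _ = (tvNorm μ₁ μ₂ / (1 - κ)) * eHolderSemi α φ := by
        rw [heH, div_eq_mul_inv]; ring
end

section
/- Let A_1,…,A_k ∈ SL(2,ℝ) act linearly on the Euclidean plane ℝ², let p_1,…,p_k ≥ 0 with Σ p_j = 1, let 0 < α < 1 and v ≥ 0. Suppose φ : ℝ²∖{0} → ℝ satisfies φ(λu) = φ(u) for all λ ≠ 0 and all nonzero u, and |φ(u) − φ(w)| ≤ v·δ(u,w)^α for all nonzero u,w. Then for all unit vectors x, y ∈ ℝ² with ‖x∧y‖ ≠ 0: |Σ_{j=1}^k p_j φ(A_j x) − Σ_{j=1}^k p_j φ(A_j y)| ≤ (1/2)·(Σ_{j=1}^k p_j ‖A_j x‖^{−2α} + Σ_{j=1}^k p_j ‖A_j y‖^{−2α}) · v · δ(x,y)^α. -/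
open scoped RealInnerProductSpace

/-- `‖u ∧ w‖ = sqrt(‖u‖²‖w‖² − ⟨u,w⟫²)`, the area of the parallelogram spanned by `u, w`. -/
noncomputable def wedgeNorm (u w : EuclideanSpace ℝ (Fin 2)) : ℝ :=
  Real.sqrt (‖u‖ ^ 2 * ‖w‖ ^ 2 - ⟪u, w⟫ ^ 2)

/-- The projective distance `δ(x,y) = ‖x ∧ y‖/(‖x‖·‖y‖)` between nonzero vectors. -/
noncomputable def projDist (x y : EuclideanSpace ℝ (Fin 2)) : ℝ :=
  wedgeNorm x y / (‖x‖ * ‖y‖)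

/-- The linear action of a matrix in `SL(2,ℝ)` on the Euclidean plane. -/
noncomputable def slAct (M : Matrix.SpecialLinearGroup (Fin 2) ℝ)
    (x : EuclideanSpace ℝ (Fin 2)) : EuclideanSpace ℝ (Fin 2) :=
  Matrix.toEuclideanLin (M : Matrix (Fin 2) (Fin 2) ℝ) x

lemma inner_two (u w : EuclideanSpace ℝ (Fin 2)) :
    ⟪u, w⟫ = u 0 * w 0 + u 1 * w 1 := by
  simp [EuclideanSpace.inner_eq_star_dotProduct, dotProduct, Fin.sum_univ_two, mul_comm]

lemma normsq_two (u : EuclideanSpace ℝ (Fin 2)) :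
    ‖u‖ ^ 2 = u 0 ^ 2 + u 1 ^ 2 := by
  rw [← real_inner_self_eq_norm_sq, inner_two]; ring

lemma wedgeNorm_eq (u w : EuclideanSpace ℝ (Fin 2)) :
    wedgeNorm u w = |u 0 * w 1 - u 1 * w 0| := by
  rw [wedgeNorm, inner_two, normsq_two, normsq_two]
  rw [show (u 0 ^ 2 + u 1 ^ 2) * (w 0 ^ 2 + w 1 ^ 2) - (u 0 * w 0 + u 1 * w 1) ^ 2
      = (u 0 * w 1 - u 1 * w 0) ^ 2 by ring]
  exact Real.sqrt_sq_eq_abs _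

lemma slAct_apply (M : Matrix.SpecialLinearGroup (Fin 2) ℝ)
    (x : EuclideanSpace ℝ (Fin 2)) (i : Fin 2) :
    slAct M x i = (M : Matrix (Fin 2) (Fin 2) ℝ) i 0 * x 0
      + (M : Matrix (Fin 2) (Fin 2) ℝ) i 1 * x 1 := by
  simp [slAct, Matrix.toEuclideanLin_apply, Matrix.mulVec, dotProduct, Fin.sum_univ_two]
  fin_cases i <;> rfl

lemma wedgeNorm_slAct (M : Matrix.SpecialLinearGroup (Fin 2) ℝ)
    (x y : EuclideanSpace ℝ (Fin 2)) :
    wedgeNorm (slAct M x) (slAct M y) = wedgeNorm x y := by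
  have hdet : (M : Matrix (Fin 2) (Fin 2) ℝ).det = 1 := M.2
  rw [Matrix.det_fin_two] at hdet
  rw [wedgeNorm_eq, wedgeNorm_eq, slAct_apply, slAct_apply, slAct_apply, slAct_apply]
  have h : ((M : Matrix (Fin 2) (Fin 2) ℝ) 0 0 * x 0 + (M : Matrix (Fin 2) (Fin 2) ℝ) 0 1 * x 1) *
        ((M : Matrix (Fin 2) (Fin 2) ℝ) 1 0 * y 0 + (M : Matrix (Fin 2) (Fin 2) ℝ) 1 1 * y 1) -
      ((M : Matrix (Fin 2) (Fin 2) ℝ) 1 0 * x 0 + (M : Matrix (Fin 2) (Fin 2) ℝ) 1 1 * x 1) *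
        ((M : Matrix (Fin 2) (Fin 2) ℝ) 0 0 * y 0 + (M : Matrix (Fin 2) (Fin 2) ℝ) 0 1 * y 1)
      = x 0 * y 1 - x 1 * y 0 := by linear_combination (x 0 * y 1 - x 1 * y 0) * hdet
  rw [h]

lemma slAct_ne_zero {M : Matrix.SpecialLinearGroup (Fin 2) ℝ}
    {x y : EuclideanSpace ℝ (Fin 2)} (h : wedgeNorm x y ≠ 0) : slAct M x ≠ 0 := by
  intro hx
  apply h
  rw [← wedgeNorm_slAct M, wedgeNorm_eq, hx]
  simp

lemma wedgeNorm_symm (x y : EuclideanSpace ℝ (Fin 2)) :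
    wedgeNorm x y = wedgeNorm y x := by
  rw [wedgeNorm_eq, wedgeNorm_eq, abs_sub_comm]
  ring_nf

/-- Hölder contraction bound for the transfer operator of an `SL(2,ℝ)` random cocycle:
for a projective `α`-Hölder observable `φ` with constant `v`, and unit vectors `x, y` with
`‖x∧y‖ ≠ 0`,
`|Σ_j p_j φ(A_j x) − Σ_j p_j φ(A_j y)| ≤ ½(Σ_j p_j ‖A_j x‖^{−2α} + Σ_j p_j ‖A_j y‖^{−2α}) · v · δ(x,y)^α`. -/
theorem stmt18 {k : ℕ} (A : Fin k → Matrix.SpecialLinearGroup (Fin 2) ℝ)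
    (p : Fin k → ℝ) (hp : ∀ j, 0 ≤ p j) (hpsum : ∑ j : Fin k, p j = 1)
    (α : ℝ) (hα0 : 0 < α) (hα1 : α < 1) (v : ℝ) (hv : 0 ≤ v)
    (φ : EuclideanSpace ℝ (Fin 2) → ℝ)
    (hφproj : ∀ (c : ℝ) (u : EuclideanSpace ℝ (Fin 2)), c ≠ 0 → u ≠ 0 → φ (c • u) = φ u)
    (hφhold : ∀ u w : EuclideanSpace ℝ (Fin 2), u ≠ 0 → w ≠ 0 →
      |φ u - φ w| ≤ v * projDist u w ^ α) :
    ∀ x y : EuclideanSpace ℝ (Fin 2), ‖x‖ = 1 → ‖y‖ = 1 → wedgeNorm x y ≠ 0 →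
      |(∑ j : Fin k, p j * φ (slAct (A j) x)) - ∑ j : Fin k, p j * φ (slAct (A j) y)| ≤
        (1 / 2) * ((∑ j : Fin k, p j * ‖slAct (A j) x‖ ^ (-(2 * α))) +
            ∑ j : Fin k, p j * ‖slAct (A j) y‖ ^ (-(2 * α))) *
          v * projDist x y ^ α := by
  intro x y hx hy hxy
  have hwnn : 0 ≤ wedgeNorm x y := Real.sqrt_nonneg _
  have hδ : projDist x y = wedgeNorm x y := by
    rw [projDist, hx, hy]; simp
  -- per-term bound
  have key : ∀ j : Fin k, |φ (slAct (A j) x) - φ (slAct (A j) y)| ≤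
      (1 / 2) * (‖slAct (A j) x‖ ^ (-(2 * α)) + ‖slAct (A j) y‖ ^ (-(2 * α)))
        * v * projDist x y ^ α := by
    intro j
    set u := slAct (A j) x with hu
    set w := slAct (A j) y with hw
    have hu0 : u ≠ 0 := slAct_ne_zero hxy
    have hw0 : w ≠ 0 := by
      have := slAct_ne_zero (M := A j) (fun h => hxy (by rwa [wedgeNorm_symm] at h))
      exact this
    have hun : (0:ℝ) < ‖u‖ := norm_pos_iff.mpr hu0
    have hwn : (0:ℝ) < ‖w‖ := norm_pos_iff.mpr hw0
    have h1 : |φ u - φ w| ≤ v * projDist u w ^ α := hφhold u w hu0 hw0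
    have h2 : projDist u w = wedgeNorm x y / (‖u‖ * ‖w‖) := by
      rw [projDist, hu, hw, wedgeNorm_slAct]
    -- rewrite the rpow of a quotient
    have h3 : projDist u w ^ α = wedgeNorm x y ^ α * (‖u‖ ^ (-α) * ‖w‖ ^ (-α)) := by
      rw [h2, Real.div_rpow hwnn (by positivity), Real.mul_rpow hun.le hwn.le,
        Real.rpow_neg hun.le, Real.rpow_neg hwn.le, div_eq_mul_inv, mul_inv]
    -- AM-GM
    have hAM : ‖u‖ ^ (-α) * ‖w‖ ^ (-α) ≤
        (1 / 2) * (‖u‖ ^ (-(2 * α)) + ‖w‖ ^ (-(2 * α))) := by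
      have e1 : ‖u‖ ^ (-(2 * α)) = (‖u‖ ^ (-α)) ^ (2:ℕ) := by
        rw [← Real.rpow_natCast (‖u‖ ^ (-α)) 2, ← Real.rpow_mul hun.le]
        norm_num
        ring_nf
      have e2 : ‖w‖ ^ (-(2 * α)) = (‖w‖ ^ (-α)) ^ (2:ℕ) := by
        rw [← Real.rpow_natCast (‖w‖ ^ (-α)) 2, ← Real.rpow_mul hwn.le]
        norm_num
        ring_nf
      rw [e1, e2]
      nlinarith [sq_nonneg (‖u‖ ^ (-α) - ‖w‖ ^ (-α))]
    calc |φ u - φ w| ≤ v * projDist u w ^ α := h1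
      _ = v * wedgeNorm x y ^ α * (‖u‖ ^ (-α) * ‖w‖ ^ (-α)) := by rw [h3]; ring
      _ ≤ v * wedgeNorm x y ^ α *
          ((1 / 2) * (‖u‖ ^ (-(2 * α)) + ‖w‖ ^ (-(2 * α)))) := by
        apply mul_le_mul_of_nonneg_left hAM (by positivity)
      _ = (1 / 2) * (‖u‖ ^ (-(2 * α)) + ‖w‖ ^ (-(2 * α))) * v * projDist x y ^ α := by
        rw [hδ]; ring
  calc |(∑ j : Fin k, p j * φ (slAct (A j) x)) - ∑ j : Fin k, p j * φ (slAct (A j) y)|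
      = |∑ j : Fin k, (p j * φ (slAct (A j) x) - p j * φ (slAct (A j) y))| := by
        rw [Finset.sum_sub_distrib]
    _ ≤ ∑ j : Fin k, |p j * φ (slAct (A j) x) - p j * φ (slAct (A j) y)| :=
        Finset.abs_sum_le_sum_abs _ _
    _ ≤ ∑ j : Fin k, p j * ((1 / 2) * (‖slAct (A j) x‖ ^ (-(2 * α))
          + ‖slAct (A j) y‖ ^ (-(2 * α))) * v * projDist x y ^ α) := by
        apply Finset.sum_le_sum
        intro j _
        rw [← mul_sub, abs_mul, abs_of_nonneg (hp j)]
        exact mul_le_mul_of_nonneg_left (key j) (hp j)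
    _ = (1 / 2) * ((∑ j : Fin k, p j * ‖slAct (A j) x‖ ^ (-(2 * α))) +
            ∑ j : Fin k, p j * ‖slAct (A j) y‖ ^ (-(2 * α))) * v * projDist x y ^ α := by
        rw [← Finset.sum_add_distrib, Finset.mul_sum, Finset.sum_mul, Finset.sum_mul]
        exact Finset.sum_congr rfl fun j _ => by ring
end
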